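/- For every 0 < r < 1, the closed disk {w ∈ ℂ : |w - 1| ≤ arcsinh(r)} (with arcsinh(r) = Real.arsinh r) is contained in the image ρ '' {z ∈ ℂ : |z| ≤ r} of the closed disk of radius r under ρ. -/

import Mathlib

open Complex

/-- Principal branch of the complex inverse hyperbolic sine. -/
noncomputable def carcsinh (z : ℂ) : ℂ := Complex.log (z + (1 + z ^ 2) ^ ((1 : ℂ) / 2))

/-- The function `ρ(z) = 1 + arcsinh z`. -/
noncomputable def ρ (z : ℂ) : ℂ := 1 + carcsinh z

/-- For `0 < r < 1`, the closed disk `{w : |w - 1| ≤ arcsinh r}` is contained in the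
image under `ρ` of the closed disk of radius `r`. -/

lemma sinh_sub_self_mono : Monotone (fun s : ℝ => Real.sinh s - s) := by
  refine monotone_of_deriv_nonneg (by fun_prop) ?_
  intro s
  rw [deriv_fun_sub (by fun_prop) (by fun_prop), Real.deriv_sinh, deriv_id'']
  have := Real.one_le_cosh s
  simp only [Pi.one_apply]
  linarith

lemma sinh_re_im (u : ℂ) : Complex.sinh u =
    (Real.sinh u.re * Real.cos u.im : ℝ) + (Real.cosh u.re * Real.sin u.im : ℝ) * I := by
  conv_lhs => rw [← Complex.re_add_im u]
  rw [Complex.sinh_add, Complex.sinh_mul_I, Complex.cosh_mul_I,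
    ← Complex.ofReal_sinh, ← Complex.ofReal_cosh, ← Complex.ofReal_sin, ← Complex.ofReal_cos]
  push_cast
  ring

lemma cosh_re_im (u : ℂ) : Complex.cosh u =
    (Real.cosh u.re * Real.cos u.im : ℝ) + (Real.sinh u.re * Real.sin u.im : ℝ) * I := by
  conv_lhs => rw [← Complex.re_add_im u]
  rw [Complex.cosh_add, Complex.sinh_mul_I, Complex.cosh_mul_I,
    ← Complex.ofReal_sinh, ← Complex.ofReal_cosh, ← Complex.ofReal_sin, ← Complex.ofReal_cos]
  push_cast
  ring

lemma abs_sinh_le (u : ℂ) : ‖Complex.sinh u‖ ≤ Real.sinh (‖u‖) := by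
  set x := u.re
  set y := u.im
  set t := ‖u‖ with ht
  have ht0 : 0 ≤ t := norm_nonneg u
  have hx : |x| ≤ t := Complex.abs_re_le_norm u
  have hy : |y| ≤ t := Complex.abs_im_le_norm u
  have hsq : x ^ 2 + y ^ 2 = t ^ 2 := by
    rw [ht, Complex.sq_norm, Complex.normSq_apply]; ring
  have hmono : Real.sinh |x| - |x| ≤ Real.sinh t - t := sinh_sub_self_mono hx
  have h0 : Real.sinh |x| - |x| ≥ 0 := by
    have := sinh_sub_self_mono (abs_nonneg x)
    simpa using this
  have habs : Real.sinh |x| = |Real.sinh x| := (Real.abs_sinh x).symm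
  have hsin : Real.sin y ^ 2 ≤ y ^ 2 := by
    have := Real.abs_sin_le_abs (x := y)
    nlinarith [abs_nonneg y, abs_nonneg (Real.sin y), _root_.sq_abs y, _root_.sq_abs (Real.sin y)]
  have key : Real.sinh x ^ 2 + Real.sin y ^ 2 ≤ Real.sinh t ^ 2 := by
    have h1 : |Real.sinh x| ^ 2 = Real.sinh x ^ 2 := _root_.sq_abs _
    have hAB : Real.sinh t - Real.sinh |x| ≥ t - |x| := by linarith
    have hBx : Real.sinh |x| ≥ |x| := by linarith
    have hAt : Real.sinh t ≥ t := by nlinarith [abs_nonneg x]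
    have hprod : (Real.sinh t - Real.sinh |x|) * (Real.sinh t + Real.sinh |x|) ≥
        (t - |x|) * (t + |x|) := by
      apply mul_le_mul hAB (by linarith) (by positivity) (by linarith)
    nlinarith [abs_nonneg x, _root_.sq_abs x]
  have habs2 : ‖Complex.sinh u‖ ^ 2 = Real.sinh x ^ 2 + Real.sin y ^ 2 := by
    rw [Complex.sq_norm, sinh_re_im u, Complex.normSq_apply]
    simp only [Complex.add_re, Complex.add_im, Complex.ofReal_re, Complex.ofReal_im,
      Complex.mul_re, Complex.mul_im, Complex.I_re, Complex.I_im]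
    have hc := Real.sin_sq_add_cos_sq y
    have hh := Real.cosh_sq x
    nlinarith
  have hle : ‖Complex.sinh u‖ ^ 2 ≤ Real.sinh t ^ 2 := by
    rw [habs2]; exact key
  have htpos : 0 ≤ Real.sinh t := by
    have h2 : Real.sinh 0 - 0 ≤ Real.sinh t - t := sinh_sub_self_mono ht0
    rw [Real.sinh_zero] at h2
    linarith
  nlinarith [norm_nonneg (Complex.sinh u)]

lemma carcsinh_sinh (u : ℂ) (him : |u.im| < Real.pi / 2) :
    carcsinh (Complex.sinh u) = u := by
  have hcos : 0 < Real.cos u.im :=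
    Real.cos_pos_of_mem_Ioo ⟨by cases abs_lt.1 him; linarith, (abs_lt.1 him).2⟩
  have hre : 0 < (Complex.cosh u).re := by
    rw [cosh_re_im u]
    simp only [Complex.add_re, Complex.ofReal_re, Complex.mul_re, Complex.I_re, Complex.I_im,
      Complex.ofReal_im]
    have := Real.cosh_pos (x := u.re)
    simp
    positivity
  have hsq : (1 : ℂ) + Complex.sinh u ^ 2 = Complex.cosh u ^ 2 := by
    rw [Complex.cosh_sq]; ring
  have hroot : ((1 : ℂ) + Complex.sinh u ^ 2) ^ ((1 : ℂ) / 2) = Complex.cosh u := by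
    rw [hsq, one_div]
    exact_mod_cast Complex.sq_cpow_two_inv hre
  rw [carcsinh, hroot, Complex.sinh_add_cosh, Complex.log_exp]
  · linarith [(abs_lt.1 him).1, Real.pi_gt_three]
  · linarith [(abs_lt.1 him).2, Real.pi_gt_three]

theorem closedDisk_subset_rho_image (r : ℝ) (hr0 : 0 < r) (hr1 : r < 1) :
    {w : ℂ | ‖w - 1‖ ≤ Real.arsinh r} ⊆
      ρ '' {z : ℂ | ‖z‖ ≤ r} := by
  intro w hw
  set u := w - 1 with hu
  have hw' : ‖u‖ ≤ Real.arsinh r := hw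
  have harsinh1 : Real.arsinh r < 1 := by
    have h1 : r < Real.sinh 1 := lt_trans hr1 (Real.self_lt_sinh_iff.2 one_pos)
    have := Real.arsinh_lt_arsinh.2 h1
    rwa [Real.arsinh_sinh] at this
  have habsu : ‖u‖ < 1 := lt_of_le_of_lt hw' harsinh1
  have him : |u.im| < Real.pi / 2 := by
    have h1 : |u.im| ≤ ‖u‖ := Complex.abs_im_le_norm u
    linarith [Real.pi_gt_three]
  refine ⟨Complex.sinh u, ?_, ?_⟩
  · have h1 := abs_sinh_le u
    have h2 : Real.sinh (‖u‖) ≤ Real.sinh (Real.arsinh r) :=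
      Real.sinh_le_sinh.2 hw'
    rw [Real.sinh_arsinh] at h2
    exact le_trans h1 h2
  · rw [ρ, carcsinh_sinh u him, hu]
    ring
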